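/- In a rooted WDTAP instance, if F is a shadow-minimal feasible solution, then every link ℓ ∈ F covers both the first and the last arc of its tree path P_ℓ, and moreover ℓ is the unique link in F covering each of these two arcs. -/
import Mathlib


open scoped Classical

/-- A tree on vertex set `V`, rooted at `root`, encoded via the parent function.
Every non-root vertex `z` corresponds to the unique tree edge/arc `a_z` between
`z` and `parent z`. -/
structure ArcTree (V : Type*) where
  root : V
  parent : V → V
  parent_root : parent root = root
  reaches_root : ∀ v : V, ∃ n : ℕ, parent^[n] v = root

namespace ArcTree

variable {V : Type*}

/-- `x` is an ancestor of `y` (possibly `x = y`). -/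
def anc (T : ArcTree V) (x y : V) : Prop := ∃ n : ℕ, T.parent^[n] y = x

/-- The arc `a_z` (between `z` and `parent z`, for `z ≠ root`) lies on the
tree path between `u` and `v`. -/
def arcOnPath (T : ArcTree V) (u v z : V) : Prop :=
  z ≠ T.root ∧ ¬ (T.anc z u ↔ T.anc z v)

/-- The vertex `x` lies on the tree path between `u` and `v`. -/
def onPath (T : ArcTree V) (u v x : V) : Prop :=
  (T.anc x u ∨ T.anc x v) ∧ ∀ z, T.anc z u → T.anc z v → T.anc z x

/-- `x` is an inner vertex of the tree path between `u` and `v`. -/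
def innerOnPath (T : ArcTree V) (u v x : V) : Prop :=
  T.onPath u v x ∧ x ≠ u ∧ x ≠ v

/-- `w` is the least common ancestor of `u` and `v`. -/
def isLca (T : ArcTree V) (u v w : V) : Prop :=
  T.anc w u ∧ T.anc w v ∧ ∀ z, T.anc z u → T.anc z v → T.anc z w

end ArcTree

section Cover

variable {V : Type*}

/- Orientation convention: `up z = true` means the arc `a_z` is directed from `z` to
`parent z` (an up-arc, pointing towards the root); `up z = false` means it is directed
from `parent z` to `z` (a down-arc). -/

/-- The directed link `ℓ = (u, v)` covers the arc `a_z`, i.e. `a_z` is a backward arc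
of the tree path from `u` to `v` (equivalently, the walk from `v` back to `u`
traverses `a_z` in its forward direction). -/
def covers (T : ArcTree V) (up : V → Bool) (ℓ : V × V) (z : V) : Prop :=
  z ≠ T.root ∧
    ((T.anc z ℓ.2 ∧ ¬ T.anc z ℓ.1 ∧ up z = true) ∨
     (T.anc z ℓ.1 ∧ ¬ T.anc z ℓ.2 ∧ up z = false))

/-- The link `ℓ = (u,v)` covers the arc `a_z` in the wrong direction, i.e. `a_z` is a
forward arc of the tree path from `u` to `v`. -/
def wcovers (T : ArcTree V) (up : V → Bool) (ℓ : V × V) (z : V) : Prop :=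
  z ≠ T.root ∧
    ((T.anc z ℓ.1 ∧ ¬ T.anc z ℓ.2 ∧ up z = true) ∨
     (T.anc z ℓ.2 ∧ ¬ T.anc z ℓ.1 ∧ up z = false))

/-- `ℓ'` is a shadow of `ℓ`: the endpoints of `ℓ'` lie, in this order, on the tree path
of `ℓ`. -/
def IsShadow (T : ArcTree V) (ℓ ℓ' : V × V) : Prop :=
  T.onPath ℓ.1 ℓ.2 ℓ'.1 ∧ T.onPath ℓ'.1 ℓ.2 ℓ'.2

/-- `x` is an inner vertex of the path of the generic shadow of `ℓ` (the minimal shadow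
with the same directed coverage): `x` lies on `P_ℓ` and `ℓ` covers arcs on both sides
of `x`. -/
def innerGeneric (T : ArcTree V) (up : V → Bool) (ℓ : V × V) (x : V) : Prop :=
  T.onPath ℓ.1 ℓ.2 x ∧
    (∃ z, covers T up ℓ z ∧ T.arcOnPath ℓ.1 x z) ∧
    (∃ z, covers T up ℓ z ∧ T.arcOnPath x ℓ.2 z)

/-- The arc `a_z` (lying in the subtree of `v`) is visible to `v` with respect to the
link set `L'`. -/
def visibleArc (T : ArcTree V) (up : V → Bool) (L' : Set (V × V)) (v z : V) : Prop :=
  T.anc v z ∧ z ≠ v ∧ ∃ ℓ ∈ L', covers T up ℓ z ∧ innerGeneric T up ℓ v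

/-- A set of arcs (encoded by their lower endpoints) is ancestor-free: no arc of the
set lies on the path from another arc's apex (top endpoint) to the root. -/
def AncestorFree (T : ArcTree V) (S : Set V) : Prop :=
  ∀ z ∈ S, ∀ z' ∈ S, z ≠ z' → ¬ T.anc z' (T.parent z)

/-- The visible up-width of `v` w.r.t. the link set `L'` is at most `k`. -/
def upWidthLE (T : ArcTree V) (up : V → Bool) (L' : Set (V × V)) (v : V) (k : ℕ) : Prop :=
  ∀ S : Finset V, AncestorFree T (S : Set V) →
    (∀ z ∈ S, up z = true ∧ visibleArc T up L' v z) → S.card ≤ k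

/-- The visible down-width of `v` w.r.t. the link set `L'` is at most `k`. -/
def downWidthLE (T : ArcTree V) (up : V → Bool) (L' : Set (V × V)) (v : V) (k : ℕ) : Prop :=
  ∀ S : Finset V, AncestorFree T (S : Set V) →
    (∀ z ∈ S, up z = false ∧ visibleArc T up L' v z) → S.card ≤ k

/-- The link `ℓ` points into the subtree `T_v`. -/
def pointsInto (T : ArcTree V) (v : V) (ℓ : V × V) : Prop :=
  T.anc v ℓ.2 ∧ ℓ.2 ≠ v ∧ ¬ T.anc v ℓ.1

/-- The link `ℓ` points out of the subtree `T_v`. -/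
def pointsOut (T : ArcTree V) (v : V) (ℓ : V × V) : Prop :=
  T.anc v ℓ.1 ∧ ℓ.1 ≠ v ∧ ¬ T.anc v ℓ.2

/-- `v` is up-independent w.r.t. the link set `L'`: every link either covers no up-arc
of the subtree `T_v`, or its whole coverage lies inside `T_v`. -/
def upIndep (T : ArcTree V) (up : V → Bool) (L' : Set (V × V)) (v : V) : Prop :=
  ∀ ℓ ∈ L', (¬ ∃ z, covers T up ℓ z ∧ T.anc v z ∧ z ≠ v ∧ up z = true) ∨
    (∀ z, covers T up ℓ z → T.anc v z ∧ z ≠ v)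

/-- `v` is down-independent w.r.t. the link set `L'`. -/
def downIndep (T : ArcTree V) (up : V → Bool) (L' : Set (V × V)) (v : V) : Prop :=
  ∀ ℓ ∈ L', (¬ ∃ z, covers T up ℓ z ∧ T.anc v z ∧ z ≠ v ∧ up z = false) ∨
    (∀ z, covers T up ℓ z → T.anc v z ∧ z ≠ v)

/-- A feasible (integral) solution: every arc is covered by some link of `F`. -/
def Feasible (T : ArcTree V) (up : V → Bool) (F : Finset (V × V)) : Prop :=
  ∀ z, z ≠ T.root → ∃ ℓ ∈ F, covers T up ℓ z

/-- `F` is shadow-minimal: no link of `F` can be replaced by a proper shadow while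
maintaining feasibility. -/
def ShadowMinimal (T : ArcTree V) (up : V → Bool) (F : Finset (V × V)) : Prop :=
  ∀ ℓ ∈ F, ∀ ℓ' : V × V, IsShadow T ℓ ℓ' → ℓ' ≠ ℓ →
    ¬ Feasible T up (insert ℓ' (F.erase ℓ))

/-- A splitting of the link set: each link is mapped to a set of shadows whose tree
paths partition the arc set of its tree path. -/
def IsSplitting (T : ArcTree V) (σ : V × V → Finset (V × V)) : Prop :=
  ∀ ℓ : V × V,
    (σ ℓ).Nonempty ∧
    (∀ ℓ' ∈ σ ℓ, IsShadow T ℓ ℓ' ∧ (ℓ'.1 ≠ ℓ'.2 ∨ ℓ' = ℓ)) ∧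
    (∀ z, T.arcOnPath ℓ.1 ℓ.2 z ↔ ∃ ℓ' ∈ σ ℓ, T.arcOnPath ℓ'.1 ℓ'.2 z) ∧
    (∀ ℓ₁ ∈ σ ℓ, ∀ ℓ₂ ∈ σ ℓ, ℓ₁ ≠ ℓ₂ →
      ∀ z, T.arcOnPath ℓ₁.1 ℓ₁.2 z → ¬ T.arcOnPath ℓ₂.1 ℓ₂.2 z)

/-- The LP solution obtained from `x` by applying the splitting `σ`. -/
noncomputable def splitSol [Fintype V] (σ : V × V → Finset (V × V)) (x : V × V → ℝ) :
    V × V → ℝ :=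
  fun ℓ' => ∑ ℓ : V × V, if ℓ' ∈ σ ℓ then x ℓ else 0

/-- `x` is a feasible solution of the WDTAP set-covering LP. -/
def FeasLP [Fintype V] (T : ArcTree V) (up : V → Bool) (x : V × V → ℝ) : Prop :=
  (∀ ℓ, 0 ≤ x ℓ) ∧
    ∀ z, z ≠ T.root → 1 ≤ ∑ ℓ : V × V, if covers T up ℓ z then x ℓ else 0

end Cover

section Aux

variable {V : Type*} (T : ArcTree V)

lemma ArcTree.anc_refl (x : V) : T.anc x x := ⟨0, rfl⟩

lemma ArcTree.anc_parent (z : V) : T.anc (T.parent z) z := ⟨1, rfl⟩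

lemma ArcTree.anc_trans {a b c : V} (hab : T.anc a b) (hbc : T.anc b c) : T.anc a c := by
  obtain ⟨m, hm⟩ := hab
  obtain ⟨n, hn⟩ := hbc
  exact ⟨m + n, by rw [Function.iterate_add_apply, hn, hm]⟩

lemma ArcTree.iterate_parent_root : ∀ n, T.parent^[n] T.root = T.root := by
  intro n
  induction n with
  | zero => rfl
  | succ n ih => rw [Function.iterate_succ_apply', ih, T.parent_root]

lemma ArcTree.eq_root_of_parent_eq {z : V} (h : T.parent z = z) : z = T.root := by
  obtain ⟨n, hn⟩ := T.reaches_root z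
  have hall : ∀ k, T.parent^[k] z = z := by
    intro k
    induction k with
    | zero => rfl
    | succ k ih => rw [Function.iterate_succ_apply', ih, h]
  rw [hall n] at hn
  exact hn

lemma ArcTree.anc_antisymm {a b : V} (hab : T.anc a b) (hba : T.anc b a) : a = b := by
  obtain ⟨m, hm⟩ := hab
  obtain ⟨n, hn⟩ := hba
  rcases Nat.eq_zero_or_pos (n + m) with h0 | hpos
  · have hm0 : m = 0 := by omega
    subst hm0
    simpa using hm.symm
  · have hper : T.parent^[n + m] b = b := by
      rw [Function.iterate_add_apply, hm, hn]
    have hmul : ∀ k, T.parent^[k * (n + m)] b = b := by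
      intro k
      induction k with
      | zero => simp
      | succ k ih => rw [Nat.succ_mul, Function.iterate_add_apply, hper, ih]
    obtain ⟨N, hN⟩ := T.reaches_root b
    have hb : b = T.root := by
      have h1 : T.parent^[N * (n + m)] b = b := hmul N
      have h2 : N * (n + m) = (N * (n + m) - N) + N := by
        have : N ≤ N * (n + m) := Nat.le_mul_of_pos_right N hpos
        omega
      rw [h2, Function.iterate_add_apply, hN, T.iterate_parent_root] at h1
      exact h1.symm
    subst hb
    rw [T.iterate_parent_root] at hm
    exact hm.symm

lemma ArcTree.anc_total {a b y : V} (ha : T.anc a y) (hb : T.anc b y) :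
    T.anc a b ∨ T.anc b a := by
  obtain ⟨m, hm⟩ := ha
  obtain ⟨n, hn⟩ := hb
  rcases le_total m n with h | h
  · right
    refine ⟨n - m, ?_⟩
    rw [← hm, ← Function.iterate_add_apply, Nat.sub_add_cancel h, hn]
  · left
    refine ⟨m - n, ?_⟩
    rw [← hn, ← Function.iterate_add_apply, Nat.sub_add_cancel h, hm]

lemma ArcTree.anc_of_anc_ne {z' z : V} (h : T.anc z' z) (hne : z' ≠ z) :
    T.anc z' (T.parent z) := by
  obtain ⟨n, hn⟩ := h
  cases n with
  | zero => exact absurd hn.symm hne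
  | succ n => exact ⟨n, by rw [← Function.iterate_succ_apply]; exact hn⟩

lemma ArcTree.not_anc_of_parent_eq {z u : V} (hp : T.parent z = u) (hzr : z ≠ T.root) :
    ¬ T.anc z u := by
  intro h
  have huz : T.anc u z := ⟨1, hp⟩
  have : z = u := T.anc_antisymm h huz
  exact hzr (T.eq_root_of_parent_eq (this ▸ hp))

/-- Replacement lemma: if `ℓ''` is a proper shadow of `ℓ ∈ F` taking over all of `ℓ`'s
coverage except possibly the arc `a_z`, and some other link of `F` covers `a_z`,
then `F` is not shadow-minimal. -/
lemma replace_contradiction {T : ArcTree V} {up : V → Bool} {F : Finset (V × V)}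
    (hfeas : Feasible T up F) (hmin : ShadowMinimal T up F) {ℓ ℓ'' : V × V}
    (hℓ : ℓ ∈ F) (hsh : IsShadow T ℓ ℓ'') (hne : ℓ'' ≠ ℓ) {z : V}
    (htrans : ∀ z', covers T up ℓ z' → z' ≠ z → covers T up ℓ'' z')
    {ℓ₀ : V × V} (hℓ₀ : ℓ₀ ∈ F.erase ℓ) (hcov₀ : covers T up ℓ₀ z) : False := by
  apply hmin ℓ hℓ ℓ'' hsh hne
  intro z'' hz''
  obtain ⟨ℓ₁, hℓ₁F, hc⟩ := hfeas z'' hz''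
  by_cases h : ℓ₁ = ℓ
  · by_cases hz : z'' = z
    · exact ⟨ℓ₀, Finset.mem_insert_of_mem hℓ₀, hz ▸ hcov₀⟩
    · exact ⟨ℓ'', Finset.mem_insert_self _ _, htrans z'' (h ▸ hc) hz⟩
  · exact ⟨ℓ₁, Finset.mem_insert_of_mem (Finset.mem_erase.mpr ⟨h, hℓ₁F⟩), hc⟩

end Aux

/-- In a shadow-minimal feasible solution `F`, every link `ℓ ∈ F`
covers the first and the last arc of its tree path (the arcs of `P_ℓ` incident to its
endpoints), and it is the unique link of `F` covering each of these two arcs. -/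
theorem shadow_minimal_covers_end_arcs {V : Type*}
    (T : ArcTree V) (up : V → Bool) (F : Finset (V × V))
    (hfeas : Feasible T up F) (hmin : ShadowMinimal T up F) :
    ∀ ℓ ∈ F, ∀ z : V,
      (T.arcOnPath ℓ.1 ℓ.2 z ∧ (z = ℓ.1 ∨ T.parent z = ℓ.1)) ∨
      (T.arcOnPath ℓ.1 ℓ.2 z ∧ (z = ℓ.2 ∨ T.parent z = ℓ.2)) →
      covers T up ℓ z ∧ ∀ ℓ' ∈ F, covers T up ℓ' z → ℓ' = ℓ := by
  intro ℓ hℓ z hz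
  obtain ⟨u, v⟩ := ℓ
  simp only at hz ⊢
  have harc : T.arcOnPath u v z := by rcases hz with ⟨h, _⟩ | ⟨h, _⟩ <;> exact h
  have hend : z = u ∨ T.parent z = u ∨ z = v ∨ T.parent z = v := by tauto
  obtain ⟨hzr, hnxor⟩ := harc
  have key : ∀ ℓ₀ ∈ F.erase (u, v), ¬ covers T up ℓ₀ z := by
    intro ℓ₀ hℓ₀ hcov₀
    rcases hend with hzu | hpu | hzv | hpv
    · -- z = u, new link (parent u, v)
      subst hzu
      have hnzv : ¬ T.anc z v := fun h => hnxor ⟨fun _ => h, fun _ => T.anc_refl z⟩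
      refine replace_contradiction hfeas hmin hℓ (ℓ'' := (T.parent z, v)) ?_ ?_ ?_ hℓ₀ hcov₀
      · refine ⟨⟨Or.inl (T.anc_parent z), fun z' h1 h2 => ?_⟩,
          Or.inr (T.anc_refl v), fun z' _ h => h⟩
        exact T.anc_of_anc_ne h1 (fun he => hnzv (he ▸ h2))
      · intro h
        have : T.parent z = z := congrArg Prod.fst h
        exact hzr (T.eq_root_of_parent_eq this)
      · rintro z' ⟨hz'r, hc⟩ hz'ne
        refine ⟨hz'r, ?_⟩
        rcases hc with ⟨h1, h2, h3⟩ | ⟨h1, h2, h3⟩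
        · exact Or.inl ⟨h1, fun h => h2 (T.anc_trans h (T.anc_parent z)), h3⟩
        · exact Or.inr ⟨T.anc_of_anc_ne h1 hz'ne, h2, h3⟩
    · -- parent z = u, new link (z, v)
      have hnzu : ¬ T.anc z u := T.not_anc_of_parent_eq hpu hzr
      have hzv : T.anc z v := by
        by_contra h
        exact hnxor ⟨fun h' => absurd h' hnzu, fun h' => absurd h' h⟩
      refine replace_contradiction hfeas hmin hℓ (ℓ'' := (z, v)) ?_ ?_ ?_ hℓ₀ hcov₀
      · refine ⟨⟨Or.inr hzv, fun z' h1 h2 => ?_⟩, Or.inr (T.anc_refl v), fun z' _ h => h⟩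
        rcases T.anc_total h2 hzv with h | h
        · exact h
        · exact absurd (T.anc_trans h h1) hnzu
      · intro h
        have : z = u := congrArg Prod.fst h
        exact hnzu (this ▸ T.anc_refl z)
      · rintro z' ⟨hz'r, hc⟩ hz'ne
        refine ⟨hz'r, ?_⟩
        rcases hc with ⟨h1, h2, h3⟩ | ⟨h1, h2, h3⟩
        · refine Or.inl ⟨h1, fun h => h2 ?_, h3⟩
          exact hpu ▸ T.anc_of_anc_ne h hz'ne
        · exact Or.inr ⟨T.anc_trans (hpu ▸ h1) (T.anc_parent z), h2, h3⟩
    · -- z = v, new link (u, parent v)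
      subst hzv
      have hnzu : ¬ T.anc z u := fun h => hnxor ⟨fun _ => T.anc_refl z, fun _ => h⟩
      refine replace_contradiction hfeas hmin hℓ (ℓ'' := (u, T.parent z)) ?_ ?_ ?_ hℓ₀ hcov₀
      · refine ⟨⟨Or.inl (T.anc_refl u), fun z' h _ => h⟩,
          Or.inr (T.anc_parent z), fun z' h1 h2 => ?_⟩
        exact T.anc_of_anc_ne h2 (fun he => hnzu (he ▸ h1))
      · intro h
        have : T.parent z = z := congrArg Prod.snd h
        exact hzr (T.eq_root_of_parent_eq this)
      · rintro z' ⟨hz'r, hc⟩ hz'ne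
        refine ⟨hz'r, ?_⟩
        rcases hc with ⟨h1, h2, h3⟩ | ⟨h1, h2, h3⟩
        · exact Or.inl ⟨T.anc_of_anc_ne h1 hz'ne, h2, h3⟩
        · exact Or.inr ⟨h1, fun h => h2 (T.anc_trans h (T.anc_parent z)), h3⟩
    · -- parent z = v, new link (u, z)
      have hnzv : ¬ T.anc z v := T.not_anc_of_parent_eq hpv hzr
      have hzu : T.anc z u := by
        by_contra h
        exact hnxor ⟨fun h' => absurd h' h, fun h' => absurd h' hnzv⟩
      refine replace_contradiction hfeas hmin hℓ (ℓ'' := (u, z)) ?_ ?_ ?_ hℓ₀ hcov₀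
      · refine ⟨⟨Or.inl (T.anc_refl u), fun z' h _ => h⟩,
          Or.inl hzu, fun z' h1 h2 => ?_⟩
        rcases T.anc_total h1 hzu with h | h
        · exact h
        · exact absurd (T.anc_trans h h2) hnzv
      · intro h
        have : z = v := congrArg Prod.snd h
        exact hnzv (this ▸ T.anc_refl z)
      · rintro z' ⟨hz'r, hc⟩ hz'ne
        refine ⟨hz'r, ?_⟩
        rcases hc with ⟨h1, h2, h3⟩ | ⟨h1, h2, h3⟩
        · exact Or.inl ⟨T.anc_trans (hpv ▸ h1) (T.anc_parent z), h2, h3⟩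
        · refine Or.inr ⟨h1, fun h => h2 ?_, h3⟩
          exact hpv ▸ T.anc_of_anc_ne h hz'ne
  constructor
  · by_contra hnc
    obtain ⟨ℓ₀, hℓ₀F, hc⟩ := hfeas z hzr
    exact key ℓ₀ (Finset.mem_erase.mpr ⟨fun h => hnc (h ▸ hc), hℓ₀F⟩) hc
  · intro ℓ' hℓ' hc
    by_contra hne
    exact key ℓ' (Finset.mem_erase.mpr ⟨hne, hℓ'⟩) hc
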